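/- For e ≥ 0, define integers H_e(i,j,k) by (X+Y+Z)^e = ∑_{i,j,k} H_e(i,j,k) X^iY^jZ^k. Let w ≥ 0 and n₁, n₂ be integers with w ≤ n₁+n₂ ≤ 2w and 0 ≤ n₂ ≤ w. Then ∑_{b∈Z} (−1)^b · H_w(b+n₁+n₂−w, −b, 2w−n₁−n₂) · H_w(−(b+n₁+n₂−w), b+n₁, n₂) = (−1)^{w−n₁−n₂} · binom(w, n₁+n₂−w) · binom(w, w−n₂). -/

import Mathlib

open MvPolynomial

/-- `H e i j k` is the coefficient of `X^i Y^j Z^k` in `(X + Y + Z)^e`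
(zero if any index is negative). -/
noncomputable def Htri (e : ℕ) (i j k : ℤ) : ℤ :=
  if 0 ≤ i ∧ 0 ≤ j ∧ 0 ≤ k then
    coeff (Finsupp.single (0 : Fin 3) i.toNat + Finsupp.single (1 : Fin 3) j.toNat +
        Finsupp.single (2 : Fin 3) k.toNat)
      ((X 0 + X 1 + X 2 : MvPolynomial (Fin 3) ℤ) ^ e)
  else 0

open Finset in
lemma coeff_triple (e a b c : ℕ) (h : a + b + c = e) :
    coeff (Finsupp.single (0 : Fin 3) a + Finsupp.single (1 : Fin 3) b +
        Finsupp.single (2 : Fin 3) c)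
      ((X 0 + X 1 + X 2 : MvPolynomial (Fin 3) ℤ) ^ e)
    = Nat.multinomial Finset.univ ![a, b, c] := by
  have h3 : (X 0 + X 1 + X 2 : MvPolynomial (Fin 3) ℤ) = ∑ i : Fin 3, X i := by
    rw [Fin.sum_univ_three]
  rw [h3, Finset.sum_pow_eq_sum_piAntidiag, coeff_sum]
  rw [Finset.sum_eq_single (![a, b, c] : Fin 3 → ℕ)]
  · simp only [Fin.prod_univ_three, X_pow_eq_monomial, monomial_mul, one_mul]
    rw [show ((Nat.multinomial Finset.univ ![a,b,c] : ℕ) : MvPolynomial (Fin 3) ℤ) = C (Nat.multinomial Finset.univ ![a,b,c] : ℤ) by simp, coeff_C_mul, coeff_monomial, if_pos (by norm_num; rfl), mul_one]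
  · intro k hk hne
    simp only [Fin.prod_univ_three, X_pow_eq_monomial, monomial_mul, one_mul]
    have : (Nat.multinomial Finset.univ k : MvPolynomial (Fin 3) ℤ) = C (Nat.multinomial Finset.univ k : ℤ) := by
      simp
    rw [this, coeff_C_mul, coeff_monomial, if_neg, mul_zero]
    intro heq
    apply hne
    have h0 := DFunLike.congr_fun heq 0
    have h1 := DFunLike.congr_fun heq 1
    have h2 := DFunLike.congr_fun heq 2
    simp [Finsupp.single_apply] at h0 h1 h2
    funext i
    fin_cases i <;> simp [h0, h1, h2]
  · intro hmem
    exfalso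
    apply hmem
    simp [Finset.mem_piAntidiag, Fin.sum_univ_three, h]

lemma Htri_natCast (e a b c : ℕ) (h : a + b + c = e) :
    Htri e (a : ℤ) (b : ℤ) (c : ℤ) = Nat.multinomial Finset.univ ![a, b, c] := by
  rw [Htri, if_pos ⟨by positivity, by positivity, by positivity⟩]
  simpa using coeff_triple e a b c h

lemma Htri_zero (e : ℕ) (i j k : ℤ) (h : i < 0 ∨ j < 0 ∨ k < 0) : Htri e i j k = 0 := by
  rw [Htri, if_neg (by omega)]

lemma mult0 (b c : ℕ) : Nat.multinomial Finset.univ ![0, b, c] = (b + c).choose b := by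
  rw [Nat.multinomial_univ_three, Nat.choose_eq_factorial_div_factorial (by omega)]
  simp


/-- For `w ≤ n₁ + n₂ ≤ 2w` and `0 ≤ n₂ ≤ w`,
`∑_{b∈ℤ} (−1)^b H_w(b+n₁+n₂−w, −b, 2w−n₁−n₂) · H_w(−(b+n₁+n₂−w), b+n₁, n₂)
 = (−1)^{w−n₁−n₂} C(w, n₁+n₂−w) C(w, w−n₂)`.
(The sum over `b ∈ ℤ` is finite: all terms with `b ∉ [−w, w]` vanish.) -/
theorem Htri_sum_identity (w n₁ n₂ : ℕ) (h1 : w ≤ n₁ + n₂) (h2 : n₁ + n₂ ≤ 2 * w)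
    (h3 : n₂ ≤ w) :
    ∑ b ∈ Finset.Icc (-(w : ℤ)) (w : ℤ),
        ((-1 : ℚ) ^ b) *
          (Htri w (b + (n₁ : ℤ) + (n₂ : ℤ) - (w : ℤ)) (-b)
              (2 * (w : ℤ) - (n₁ : ℤ) - (n₂ : ℤ)) : ℚ) *
          (Htri w (-(b + (n₁ : ℤ) + (n₂ : ℤ) - (w : ℤ))) (b + (n₁ : ℤ)) (n₂ : ℤ) : ℚ)
      = ((-1 : ℚ) ^ ((w : ℤ) - (n₁ : ℤ) - (n₂ : ℤ))) *
          (w.choose (n₁ + n₂ - w) : ℚ) * (w.choose (w - n₂) : ℚ) := by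
  set b₀ : ℤ := (w : ℤ) - n₁ - n₂ with hb₀
  rw [Finset.sum_eq_single b₀]
  · -- value at b₀
    have e1 : Htri w (b₀ + n₁ + n₂ - w) (-b₀) (2 * (w:ℤ) - n₁ - n₂)
        = Nat.multinomial Finset.univ ![0, n₁ + n₂ - w, 2 * w - (n₁ + n₂)] := by
      have := Htri_natCast w 0 (n₁ + n₂ - w) (2 * w - (n₁ + n₂)) (by omega)
      convert this using 3 <;> push_cast <;> omega
    have e2 : Htri w (-(b₀ + n₁ + n₂ - w)) (b₀ + n₁) (n₂ : ℤ)
        = Nat.multinomial Finset.univ ![0, w - n₂, n₂] := by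
      have := Htri_natCast w 0 (w - n₂) n₂ (by omega)
      convert this using 3 <;> push_cast <;> omega
    rw [e1, e2, mult0, mult0]
    have c1 : n₁ + n₂ - w + (2 * w - (n₁ + n₂)) = w := by omega
    have c2 : w - n₂ + n₂ = w := by omega
    rw [c1, c2]
    push_cast
    ring
  · intro b hb hne
    rcases lt_or_gt_of_ne (show b + n₁ + n₂ - w ≠ 0 by omega) with h | h
    · rw [Htri_zero w _ _ _ (Or.inl h)]
      push_cast
      ring
    · rw [show Htri w (-(b + (n₁:ℤ) + n₂ - w)) (b + n₁) n₂ = 0 from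
          Htri_zero _ _ _ _ (Or.inl (by omega))]
      push_cast
      ring
  · intro h
    exfalso
    apply h
    rw [Finset.mem_Icc]
    omega
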